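/- Let F be a finite family of subsets of a finite set V, and let p be a positive integer such that |F| · (1 − p/|V|)^k < 1, where every member of F has size at least k ≥ 1. Then there exists a set T ⊆ V with |T| ≤ p such that T ∩ S ≠ ∅ for every S ∈ F. -/

import Mathlib

lemma aux_choose_step (m n p : ℕ) (hm : 1 ≤ m) (hmn : m ≤ n) :
    Nat.choose (m - 1) p * n ≤ Nat.choose m p * (n - p) := by
  rcases le_or_gt m p with h | h
  · have : m - 1 < p := by omega
    simp [Nat.choose_eq_zero_of_lt this]
  · obtain ⟨m', rfl⟩ : ∃ m', m = m' + 1 := ⟨m - 1, by omega⟩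
    have hid : Nat.choose m' p * (m' + 1) = Nat.choose (m' + 1) p * (m' + 1 - p) :=
      Nat.choose_mul_succ_eq m' p
    have key : (m' + 1 - p) * n ≤ (n - p) * (m' + 1) := by
      rw [Nat.sub_mul, Nat.sub_mul, Nat.mul_comm n (m' + 1)]
      exact Nat.sub_le_sub_left (Nat.mul_le_mul_left p hmn) _
    have hmul : Nat.choose m' p * n * (m' + 1) ≤ Nat.choose (m' + 1) p * (n - p) * (m' + 1) := by
      calc Nat.choose m' p * n * (m' + 1) = Nat.choose m' p * (m' + 1) * n := by ring
        _ = Nat.choose (m' + 1) p * ((m' + 1 - p) * n) := by rw [hid]; ring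
        _ ≤ Nat.choose (m' + 1) p * ((n - p) * (m' + 1)) := Nat.mul_le_mul_left _ key
        _ = Nat.choose (m' + 1) p * (n - p) * (m' + 1) := by ring
    simpa using Nat.le_of_mul_le_mul_right hmul (by omega)

lemma aux_choose_bound (n p : ℕ) (hpn : p < n) :
    ∀ s : ℕ, s ≤ n →
      (Nat.choose (n - s) p : ℝ) ≤ (Nat.choose n p : ℝ) * (((n : ℝ) - p) / n) ^ s := by
  have hn0 : (0 : ℝ) < n := by
    have : 0 < n := by omega
    exact_mod_cast this
  have hb0 : (0 : ℝ) ≤ ((n : ℝ) - p) / n := by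
    apply div_nonneg _ hn0.le
    have : (p : ℝ) ≤ n := by exact_mod_cast hpn.le
    linarith
  intro s
  induction s with
  | zero => intro _; simp
  | succ s ih =>
    intro hs
    have hsn : s ≤ n := by omega
    set m : ℕ := n - s with hm
    have hm1 : 1 ≤ m := by omega
    have hmn : m ≤ n := by omega
    have hstepR : (Nat.choose (m - 1) p : ℝ) * n ≤ (Nat.choose m p : ℝ) * ((n : ℝ) - p) := by
      have h := (Nat.cast_le (α := ℝ)).2 (aux_choose_step m n p hm1 hmn)
      have hc : ((n - p : ℕ) : ℝ) = (n : ℝ) - p := by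
        push_cast [hpn.le]; ring
      push_cast at h
      rw [hc] at h
      exact_mod_cast h
    have h1 : (Nat.choose (n - (s + 1)) p : ℝ) ≤ (Nat.choose (n - s) p : ℝ) * (((n : ℝ) - p) / n) := by
      have heq : n - (s + 1) = m - 1 := by omega
      rw [heq, ← hm, ← mul_div_assoc, le_div_iff₀ hn0]
      exact hstepR
    calc (Nat.choose (n - (s + 1)) p : ℝ)
        ≤ (Nat.choose (n - s) p : ℝ) * (((n : ℝ) - p) / n) := h1
      _ ≤ (Nat.choose n p : ℝ) * (((n : ℝ) - p) / n) ^ s * (((n : ℝ) - p) / n) :=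
          mul_le_mul_of_nonneg_right (ih hsn) hb0
      _ = (Nat.choose n p : ℝ) * (((n : ℝ) - p) / n) ^ (s + 1) := by ring

/-- Probabilistic-method transversal bound: if every member of a finite family F of
subsets of V has size at least k ≥ 1 and |F| · (1 - p/|V|)^k < 1, then there is a set
of at most p elements meeting every member of F. -/
theorem stmt_11 {V : Type*} [Fintype V] [DecidableEq V] [Nonempty V]
    (F : Finset (Finset V)) (k p : ℕ) (hk : 1 ≤ k)
    (hsize : ∀ S ∈ F, k ≤ S.card)
    (hprob : (F.card : ℝ) * (1 - (p : ℝ) / (Fintype.card V)) ^ k < 1) :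
    ∃ T : Finset V, T.card ≤ p ∧ ∀ S ∈ F, (S ∩ T).Nonempty := by
  set n := Fintype.card V with hn
  rcases le_or_gt n p with hnp | hpn
  · refine ⟨Finset.univ, by simpa [Finset.card_univ] using hnp, ?_⟩
    intro S hS
    rw [Finset.inter_univ]
    exact Finset.card_pos.mp (lt_of_lt_of_le hk (hsize S hS))
  · by_contra hcon
    push_neg at hcon
    set 𝒯 := Finset.powersetCard p (Finset.univ : Finset V) with h𝒯
    have hTcard : 𝒯.card = Nat.choose n p := by
      simp [h𝒯, Finset.card_univ, hn]
    have hmiss : ∀ T ∈ 𝒯, 1 ≤ (F.filter (fun S => S ∩ T = ∅)).card := by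
      intro T hT
      rw [Finset.mem_powersetCard] at hT
      obtain ⟨S, hS, hSe⟩ := hcon T (le_of_eq hT.2)
      exact Finset.card_pos.2 ⟨S, Finset.mem_filter.2 ⟨hS, hSe⟩⟩
    have hdc : ∑ T ∈ 𝒯, (F.filter (fun S => S ∩ T = ∅)).card
        = ∑ S ∈ F, (𝒯.filter (fun T => S ∩ T = ∅)).card := by
      simp_rw [Finset.card_filter]
      rw [Finset.sum_comm]
    have hfilter : ∀ S ∈ F, (𝒯.filter (fun T => S ∩ T = ∅)).card
        = Nat.choose (n - S.card) p := by
      intro S hS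
      have hset : 𝒯.filter (fun T => S ∩ T = ∅) = Finset.powersetCard p Sᶜ := by
        ext T
        simp only [h𝒯, Finset.mem_filter, Finset.mem_powersetCard, Finset.subset_iff,
          Finset.eq_empty_iff_forall_notMem, Finset.mem_compl, Finset.mem_inter,
          Finset.mem_univ, true_implies]
        constructor
        · rintro ⟨⟨-, hc⟩, he⟩
          exact ⟨fun {x} hx hxS => he x ⟨hxS, hx⟩, hc⟩
        · rintro ⟨hsub, hc⟩
          exact ⟨⟨fun {x} _ => trivial, hc⟩, fun x ⟨hxS, hxT⟩ => hsub hxT hxS⟩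
      rw [hset, Finset.card_powersetCard, Finset.card_compl]
    -- ℕ inequality
    have hnat : Nat.choose n p ≤ ∑ S ∈ F, Nat.choose (n - S.card) p := by
      calc Nat.choose n p = ∑ _T ∈ 𝒯, 1 := by rw [Finset.sum_const, smul_eq_mul, mul_one, hTcard]
        _ ≤ ∑ T ∈ 𝒯, (F.filter (fun S => S ∩ T = ∅)).card := Finset.sum_le_sum hmiss
        _ = ∑ S ∈ F, (𝒯.filter (fun T => S ∩ T = ∅)).card := hdc
        _ = ∑ S ∈ F, Nat.choose (n - S.card) p := Finset.sum_congr rfl hfilter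
    -- to ℝ
    have hn0 : (0 : ℝ) < n := by
      have : 0 < n := by omega
      exact_mod_cast this
    have hpR : (p : ℝ) ≤ n := by exact_mod_cast hpn.le
    have hb0 : (0 : ℝ) ≤ ((n : ℝ) - p) / n := div_nonneg (by linarith) hn0.le
    have hb1 : ((n : ℝ) - p) / n ≤ 1 := by
      rw [div_le_one hn0]; linarith
    have hCpos : (0 : ℝ) < (Nat.choose n p : ℝ) := by
      exact_mod_cast Nat.choose_pos hpn.le
    have hterm : ∀ S ∈ F, (Nat.choose (n - S.card) p : ℝ)
        ≤ (Nat.choose n p : ℝ) * (((n : ℝ) - p) / n) ^ k := by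
      intro S hS
      have hScard : S.card ≤ n := by
        simpa using Finset.card_le_card (Finset.subset_univ S)
      calc (Nat.choose (n - S.card) p : ℝ)
          ≤ (Nat.choose n p : ℝ) * (((n : ℝ) - p) / n) ^ S.card :=
            aux_choose_bound n p hpn S.card hScard
        _ ≤ (Nat.choose n p : ℝ) * (((n : ℝ) - p) / n) ^ k := by
            apply mul_le_mul_of_nonneg_left _ hCpos.le
            exact pow_le_pow_of_le_one hb0 hb1 (hsize S hS)
    have hb_eq : (1 - (p : ℝ) / n) = ((n : ℝ) - p) / n := by
      field_simp
    have hsumR : (Nat.choose n p : ℝ) ≤ (F.card : ℝ) * ((((n : ℝ) - p) / n) ^ k) * (Nat.choose n p : ℝ) := by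
      calc (Nat.choose n p : ℝ) ≤ (∑ S ∈ F, (Nat.choose (n - S.card) p : ℝ)) := by
            exact_mod_cast hnat
        _ ≤ ∑ _S ∈ F, (Nat.choose n p : ℝ) * (((n : ℝ) - p) / n) ^ k :=
            Finset.sum_le_sum hterm
        _ = (F.card : ℝ) * ((((n : ℝ) - p) / n) ^ k) * (Nat.choose n p : ℝ) := by
            rw [Finset.sum_const, nsmul_eq_mul]; ring
    rw [hb_eq] at hprob
    nlinarith [mul_lt_mul_of_pos_right hprob hCpos]
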